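/- (Refined backward Lipschitz estimate depending on the number of shocks, proved inside Lemma B.4.) Let the model data satisfy the Lipschitz assumptions, let μ, μ̄ ∈ M, and let v, v̄ be the unique regular solutions of (E1) and (E3) given μ and μ̄ respectively. Then for every (t,u) ∈ TS, ‖v(t,u) − v̄(t,u)‖ ≤ (L_Ψ + K1·T) · exp(K2·T) · ( Σ_{i=0}^{n−Z(u)} ( exp(K2·T) · λmax · T )^i ) · sup_{(s,w)∈TS} ‖μ(s,w) − μ̄(s,w)‖. -/

import Mathlib

open MeasureTheory
open scoped BigOperators Classical

namespace MFGShocks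

/-- The probability simplex `𝒫(𝕊)` in `ℝ^S`. -/
def simplex (S : ℕ) : Set (Fin S → ℝ) :=
  {m | (∀ i, 0 ≤ m i) ∧ ∑ i, m i = 1}

/-- Membership in the parameter set `𝕌`: for some `k ≤ n`, the first `k` coordinates are
increasing and lie in `[0,T]` and the remaining coordinates equal `-1`. -/
def memU (n : ℕ) (T : ℝ) (u : Fin n → ℝ) : Prop :=
  ∃ k ≤ n, (∀ i : Fin n, (i : ℕ) < k → u i ∈ Set.Icc (0 : ℝ) T) ∧
    (∀ i j : Fin n, (j : ℕ) < k → i ≤ j → u i ≤ u j) ∧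
    (∀ i : Fin n, k ≤ (i : ℕ) → u i = -1)

/-- `Z(u)`: the number of coordinates of `u` different from `-1`, i.e.\ the number of
shocks recorded in `u`. -/
noncomputable def Zu {n : ℕ} (u : Fin n → ℝ) : ℕ :=
  (Finset.univ.filter fun i => u i ≠ -1).card

/-- Membership `(t,u) ∈ TS`. -/
def memTS (n : ℕ) (T : ℝ) (t : ℝ) (u : Fin n → ℝ) : Prop :=
  memU n T u ∧ t ∈ Set.Icc (0 : ℝ) T ∧ ∀ i, u i ≤ t

/-- `→(u,t)`: record a new shock at time `t` (replace coordinate `Z(u)+1` of `u` by `t`). -/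
noncomputable def push {n : ℕ} (u : Fin n → ℝ) (t : ℝ) : Fin n → ℝ :=
  fun i => if (i : ℕ) = Zu u then t else u i

/-- `←u`: delete the last shock (replace coordinate `Z(u)` of `u` by `-1`). -/
noncomputable def pop {n : ℕ} (u : Fin n → ℝ) : Fin n → ℝ :=
  fun i => if (i : ℕ) + 1 = Zu u then -1 else u i

/-- `t_u = u^{Z(u)}`: the time of the last shock recorded in `u` (`0` if there is none). -/
noncomputable def lastTime {n : ℕ} (u : Fin n → ℝ) : ℝ :=
  if h : Zu u - 1 < n then u ⟨Zu u - 1, h⟩ else 0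

/-- The left endpoint of the time interval associated with the parameter `u`:
`t_u` if `u` records at least one shock, and `0` otherwise. -/
noncomputable def startTime {n : ℕ} (u : Fin n → ℝ) : ℝ :=
  if Zu u = 0 then 0 else lastTime u

/-- `f` is absolutely continuous on the interval `[a,b]`. -/
def AbsContOn {E : Type*} [NormedAddCommGroup E] (f : ℝ → E) (a b : ℝ) : Prop :=
  ∀ ε > (0 : ℝ), ∃ δ > (0 : ℝ), ∀ (N : ℕ) (c d : Fin N → ℝ),
    (∀ k, a ≤ c k ∧ c k ≤ d k ∧ d k ≤ b) →
    (∀ k l, k ≠ l → Set.Ioo (c k) (d k) ∩ Set.Ioo (c l) (d l) = ∅) →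
    ∑ k, (d k - c k) < δ → ∑ k, ‖f (d k) - f (c k)‖ < ε

/-- A function `f : TS → ℝ^S` is regular if `f(·,u)` is absolutely continuous on
`[max_k u^k, T]` (intersected with `[0,T]`) for every `u ∈ 𝕌`. -/
def Regular (S n : ℕ) (T : ℝ) (f : ℝ → (Fin n → ℝ) → Fin S → ℝ) : Prop :=
  ∀ u : Fin n → ℝ, memU n T u → AbsContOn (fun t => f t u) (startTime u) T

/-- The model data: reduced-form running reward `ψ̂`, reduced-form intensity matrix `Q̂`,
shock intensities `λ`, terminal reward `Ψ`, relocation map `J` (independent of the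
distribution) and initial distribution `m₀`. -/
structure Model (S n : ℕ) where
  psi : ℝ → (Fin n → ℝ) → (Fin S → ℝ) → (Fin S → ℝ) → Fin S → ℝ
  Q : ℝ → (Fin n → ℝ) → (Fin S → ℝ) → (Fin S → ℝ) → Fin S → Fin S → ℝ
  lam : ℕ → ℝ → (Fin S → ℝ) → ℝ
  Psi : ℕ → (Fin S → ℝ) → Fin S → ℝ
  J : ℝ → Fin S → Fin S
  m0 : Fin S → ℝ

/-- The standing (boundedness, measurability, intensity-matrix and Lipschitz) assumptions on
the model data, together with the constants `Ψmax, ψmax, Qmax, λmax, Jmax` bounding the data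
and the Lipschitz constants `L_ψ̂, L_Q̂, L_Ψ, L_λ`.  Throughout, `ℝ^S` carries the maximum
norm and the matrix norm is the compatible induced one (maximal absolute row sum). -/
structure Hyps (S n : ℕ) (T : ℝ) (D : Model S n)
    (Lpsi LQ LPsi Llam Psimax psimax Qmax lammax : ℝ) (Jmax : ℕ) : Prop where
  hS : 1 ≤ S
  hn : 1 ≤ n
  hT : 0 < T
  hm0 : D.m0 ∈ simplex S
  hLpsi : 0 < Lpsi
  hLQ : 0 < LQ
  hLPsi : 0 < LPsi
  hLlam : 0 < Llam
  psi_meas : Measurable fun p : ℝ × (Fin n → ℝ) × (Fin S → ℝ) × (Fin S → ℝ) =>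
    D.psi p.1 p.2.1 p.2.2.1 p.2.2.2
  Q_meas : Measurable fun p : ℝ × (Fin n → ℝ) × (Fin S → ℝ) × (Fin S → ℝ) =>
    D.Q p.1 p.2.1 p.2.2.1 p.2.2.2
  lam_meas : ∀ k, Measurable fun p : ℝ × (Fin S → ℝ) => D.lam k p.1 p.2
  Psi_meas : ∀ k, Measurable (D.Psi k)
  J_meas : Measurable D.J
  psi_bdd : ∀ t u m v, memTS n T t u → m ∈ simplex S → ∀ i, |D.psi t u m v i| ≤ psimax
  Q_bdd : ∀ t u m v, memTS n T t u → m ∈ simplex S → ∀ i, ∑ j, |D.Q t u m v i j| ≤ Qmax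
  Q_offdiag : ∀ t u m v i j, i ≠ j → 0 ≤ D.Q t u m v i j
  Q_rowsum : ∀ t u m v i, ∑ j, D.Q t u m v i j = 0
  lam_pos : ∀ k, 1 ≤ k → k ≤ n → ∀ t ∈ Set.Icc (0 : ℝ) T, ∀ m ∈ simplex S,
    0 < D.lam k t m
  lam_bdd : ∀ k, 1 ≤ k → k ≤ n → ∀ t ∈ Set.Icc (0 : ℝ) T, ∀ m ∈ simplex S,
    D.lam k t m ≤ lammax
  Psi_bdd : ∀ k ≤ n, ∀ m ∈ simplex S, ∀ i, |D.Psi k m i| ≤ Psimax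
  psi_lip : ∀ t u, memTS n T t u → ∀ m₁ ∈ simplex S, ∀ m₂ ∈ simplex S,
    ∀ v₁ v₂ : Fin S → ℝ, ∀ i,
      |D.psi t u m₁ v₁ i - D.psi t u m₂ v₂ i| ≤ Lpsi * (‖m₁ - m₂‖ + ‖v₁ - v₂‖)
  Q_lip : ∀ t u, memTS n T t u → ∀ m₁ ∈ simplex S, ∀ m₂ ∈ simplex S,
    ∀ v₁ v₂ : Fin S → ℝ, ∀ i,
      ∑ j, |D.Q t u m₁ v₁ i j - D.Q t u m₂ v₂ i j| ≤ LQ * (‖m₁ - m₂‖ + ‖v₁ - v₂‖)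
  Psi_lip : ∀ k ≤ n, ∀ m₁ ∈ simplex S, ∀ m₂ ∈ simplex S,
    ‖D.Psi k m₁ - D.Psi k m₂‖ ≤ LPsi * ‖m₁ - m₂‖
  lam_lip : ∀ k, 1 ≤ k → k ≤ n → ∀ t ∈ Set.Icc (0 : ℝ) T, ∀ m₁ ∈ simplex S, ∀ m₂ ∈ simplex S,
    |D.lam k t m₁ - D.lam k t m₂| ≤ Llam * ‖m₁ - m₂‖
  J_bdd : ∀ t ∈ Set.Icc (0 : ℝ) T, ∀ j : Fin S,
    (Finset.univ.filter fun i => D.J t i = j).card ≤ Jmax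

/-- The constant `v_max`. -/
noncomputable def vmaxC (n : ℕ) (T Psimax psimax Qmax lammax : ℝ) : ℝ :=
  (Psimax + psimax * T) * Real.exp ((Qmax + lammax) * T) *
    ∑ i ∈ Finset.range (n + 1), (Real.exp ((Qmax + lammax) * T) * lammax * T) ^ i

/-- The constant `K₁ = L_ψ̂ + L_Q̂ v_max + 2 v_max L_λ`. -/
noncomputable def K1C (n : ℕ) (T Lpsi LQ Llam Psimax psimax Qmax lammax : ℝ) : ℝ :=
  Lpsi + LQ * vmaxC n T Psimax psimax Qmax lammax +
    2 * vmaxC n T Psimax psimax Qmax lammax * Llam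

/-- The constant `K₂ = L_ψ̂ + v_max L_Q̂ + Qmax + λmax`. -/
noncomputable def K2C (n : ℕ) (T Lpsi LQ Psimax psimax Qmax lammax : ℝ) : ℝ :=
  Lpsi + vmaxC n T Psimax psimax Qmax lammax * LQ + Qmax + lammax

/-- The right-hand side of the backward equation (E1), written for the integral
(Carathéodory) formulation `v(t,u) = Ψ(Z(u),μ(T,u)) + ∫_t^T (E1rhs)(s) ds`. -/
noncomputable def E1rhs {S n : ℕ} (D : Model S n)
    (μ v : ℝ → (Fin n → ℝ) → Fin S → ℝ) (u : Fin n → ℝ) (i : Fin S) (s : ℝ) : ℝ :=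
  D.psi s u (μ s u) (v s u) i + (∑ j, D.Q s u (μ s u) (v s u) i j * v s u j) +
    (if Zu u < n then
      D.lam (Zu u + 1) s (μ s u) * (v s (push u s) (D.J s i) - v s u i)
    else 0)

/-- `v` is a (Carathéodory) solution of the backward equation (E1) with terminal
condition (E3), given the flow `μ`. -/
def SolBackward (S n : ℕ) (T : ℝ) (D : Model S n)
    (μ v : ℝ → (Fin n → ℝ) → Fin S → ℝ) : Prop :=
  ∀ u : Fin n → ℝ, memU n T u →
    (∀ i : Fin S, v T u i = D.Psi (Zu u) (μ T u) i) ∧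
    ∀ t : ℝ, memTS n T t u → ∀ i : Fin S,
      IntervalIntegrable (E1rhs D μ v u i) volume t T ∧
      v t u i = D.Psi (Zu u) (μ T u) i + ∫ s in t..T, E1rhs D μ v u i s

/-- The right-hand side of the forward equation (E2). -/
noncomputable def E2rhs {S n : ℕ} (D : Model S n)
    (v μ : ℝ → (Fin n → ℝ) → Fin S → ℝ) (u : Fin n → ℝ) (i : Fin S) (s : ℝ) : ℝ :=
  ∑ j, μ s u j * D.Q s u (μ s u) (v s u) j i

/-- `μ` is a (Carathéodory) solution of the forward equation (E2) with initial
condition (E4) and consistency conditions (E5), given the value function `v`. -/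
def SolForward (S n : ℕ) (T : ℝ) (D : Model S n)
    (v μ : ℝ → (Fin n → ℝ) → Fin S → ℝ) : Prop :=
  (∀ i, μ 0 (fun _ => (-1 : ℝ)) i = D.m0 i) ∧
  (∀ u : Fin n → ℝ, memU n T u → 1 ≤ Zu u → ∀ j : Fin S,
    μ (lastTime u) u j =
      ∑ i, if D.J (lastTime u) i = j then μ (lastTime u) (pop u) i else 0) ∧
  (∀ u : Fin n → ℝ, memU n T u → ∀ t : ℝ, memTS n T t u → ∀ i : Fin S,
    IntervalIntegrable (E2rhs D v μ u i) volume (startTime u) t ∧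
    μ t u i = μ (startTime u) u i + ∫ s in (startTime u)..t, E2rhs D v μ u i s)

/-- Membership in `M`: a `𝒫(𝕊)`-valued function on `TS` that is `Qmax`-Lipschitz in time. -/
def MemM (S n : ℕ) (T Qmax : ℝ) (μ : ℝ → (Fin n → ℝ) → Fin S → ℝ) : Prop :=
  (∀ t u, memTS n T t u → μ t u ∈ simplex S) ∧
  ∀ u : Fin n → ℝ, memU n T u → ∀ t₁ t₂ : ℝ, memTS n T t₁ u → memTS n T t₂ u →
    ‖μ t₁ u - μ t₂ u‖ ≤ Qmax * |t₁ - t₂|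

/-- Membership in `V`: a regular function on `TS` bounded by `v_max` in supremum norm. -/
def MemV (S n : ℕ) (T vmaxVal : ℝ) (v : ℝ → (Fin n → ℝ) → Fin S → ℝ) : Prop :=
  Regular S n T v ∧ ∀ t u, memTS n T t u → ‖v t u‖ ≤ vmaxVal

/-- The supremum norm over `TS` of a function `f : TS → ℝ^S`. -/
noncomputable def supTS (S n : ℕ) (T : ℝ) (f : ℝ → (Fin n → ℝ) → Fin S → ℝ) : ℝ :=
  sSup {r : ℝ | ∃ t u, memTS n T t u ∧ r = ‖f t u‖}

end MFGShocks

namespace MFGShocks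

open Set

lemma gronwall_back {a b M C : ℝ} (hab : a ≤ b) (hC : 0 < C) (hM : 0 ≤ M)
    {g : ℝ → ℝ} (hg : ContinuousOn g (Set.Icc a b))
    (hg0 : ∀ t ∈ Set.Icc a b, 0 ≤ g t)
    (hineq : ∀ t ∈ Set.Icc a b, g t ≤ M + C * ∫ s in t..b, g s) :
    ∀ t ∈ Set.Icc a b, g t ≤ M * Real.exp (C * (b - t)) := by
  set cl : ℝ → ℝ := fun x => max a (min b x) with hcl
  have hclm : ∀ x, cl x ∈ Set.Icc a b := fun x =>
    ⟨le_max_left _ _, max_le hab (min_le_left _ _)⟩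
  have hclcont : Continuous cl := continuous_const.max (continuous_const.min continuous_id)
  set G : ℝ → ℝ := fun x => g (cl x) with hG
  have hGc : Continuous G := hg.comp_continuous hclcont hclm
  have hGeq : ∀ x ∈ Set.Icc a b, G x = g x := by
    intro x hx
    have : cl x = x := by
      simp only [hcl]
      rw [min_eq_right hx.2, max_eq_right hx.1]
    simp [hG, this]
  have hG0 : ∀ x, 0 ≤ G x := fun x => hg0 _ (hclm x)
  have hGint : ∀ c d : ℝ, IntervalIntegrable G volume c d := fun c d =>
    hGc.intervalIntegrable c d
  have hGineq : ∀ t ∈ Set.Icc a b, G t ≤ M + C * ∫ s in t..b, G s := by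
    intro t ht
    have h1 : (∫ s in t..b, G s) = ∫ s in t..b, g s := by
      apply intervalIntegral.integral_congr
      intro s hs
      apply hGeq
      have : uIcc t b ⊆ Set.Icc a b := by
        rw [uIcc_of_le ht.2]
        exact Icc_subset_Icc ht.1 le_rfl
      exact this hs
    rw [hGeq t ht, h1]
    exact hineq t ht
  set F : ℝ → ℝ := fun y => ∫ x in a..y, G x with hF
  have hFc : Continuous F := intervalIntegral.continuous_primitive (fun c d => hGint c d) a
  have hFd : ∀ y : ℝ, HasDerivAt F (G y) y := by
    intro y
    exact intervalIntegral.integral_hasDerivAt_right (hGint a y)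
      hGc.stronglyMeasurable.stronglyMeasurableAtFilter hGc.continuousAt
  set f : ℝ → ℝ := fun x => ∫ s in (b - x)..b, G s with hf
  have hfeq : ∀ x, f x = F b - F (b - x) := by
    intro x
    have := intervalIntegral.integral_add_adjacent_intervals (hGint a (b - x)) (hGint (b - x) b)
    simp only [hf, hF]
    linarith
  have hfd : ∀ x : ℝ, HasDerivAt f (G (b - x)) x := by
    intro x
    have h1 : HasDerivAt (fun x : ℝ => b - x) (-1) x := (hasDerivAt_id x).const_sub b
    have h2 : HasDerivAt (fun x => F (b - x)) (G (b - x) * (-1)) x :=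
      (hFd (b - x)).comp x h1
    have h3 : HasDerivAt (fun x => F b - F (b - x)) (-(G (b - x) * (-1))) x :=
      h2.const_sub (F b)
    have h4 : HasDerivAt (fun x => F b - F (b - x)) (G (b - x)) x := by
      convert h3 using 1; ring
    have : f = fun x => F b - F (b - x) := funext hfeq
    rw [this]
    exact h4
  have hfnn : ∀ x ∈ Set.Icc (0:ℝ) (b - a), 0 ≤ f x := by
    intro x hx
    apply intervalIntegral.integral_nonneg (by linarith [hx.1] : b - x ≤ b)
    intro s _; exact hG0 s
  have key := norm_le_gronwallBound_of_norm_deriv_right_le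
    (f := f) (f' := fun x => G (b - x)) (δ := 0) (K := C) (ε := M) (a := 0) (b := b - a)
    (Continuous.continuousOn (by
      have : f = fun x => F b - F (b - x) := funext hfeq
      rw [this]
      exact continuous_const.sub (hFc.comp (continuous_const.sub continuous_id))))
    (fun x _ => (hfd x).hasDerivWithinAt)
    (by
      simp only [hf, sub_zero, Real.norm_eq_abs]
      rw [intervalIntegral.integral_same]
      simp)
    (by
      intro x hx
      have hbx : b - x ∈ Set.Icc a b := ⟨by linarith [hx.2], by linarith [hx.1]⟩
      have h1 : G (b - x) ≤ M + C * ∫ s in (b - x)..b, G s := hGineq _ hbx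
      have h2 : ‖f x‖ = f x := abs_of_nonneg (hfnn x ⟨hx.1, le_of_lt hx.2⟩)
      rw [Real.norm_eq_abs, abs_of_nonneg (hG0 _), h2]
      have : f x = ∫ s in (b - x)..b, G s := rfl
      linarith [this ▸ h1])
  intro t ht
  have hx : b - t ∈ Set.Icc (0:ℝ) (b - a) := ⟨by linarith [ht.2], by linarith [ht.1]⟩
  have hkey := key (b - t) hx
  rw [Real.norm_eq_abs, abs_of_nonneg (hfnn _ hx), sub_zero,
    gronwallBound_of_K_ne_0 (ne_of_gt hC)] at hkey
  have h1 : g t = G t := (hGeq t ht).symm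
  have hfbt : f (b - t) = ∫ s in t..b, G s := by simp only [hf, sub_sub_cancel]
  have h2 : G t ≤ M + C * f (b - t) := by rw [hfbt]; exact hGineq t ht
  rw [h1]
  calc G t ≤ M + C * f (b - t) := h2
    _ ≤ M + C * (0 * Real.exp (C * (b - t)) + M / C * (Real.exp (C * (b - t)) - 1)) := by
        nlinarith
    _ = M * Real.exp (C * (b - t)) := by field_simp; ring

lemma Zu_eq {n : ℕ} {T : ℝ} {u : Fin n → ℝ} {k : ℕ} (hk : k ≤ n)
    (h1 : ∀ i : Fin n, (i : ℕ) < k → u i ∈ Set.Icc (0 : ℝ) T)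
    (h3 : ∀ i : Fin n, k ≤ (i : ℕ) → u i = -1) : Zu u = k := by
  have hfil : (Finset.univ.filter fun i : Fin n => u i ≠ -1)
      = Finset.univ.filter fun i : Fin n => (i : ℕ) < k := by
    ext i
    simp only [Finset.mem_filter, Finset.mem_univ, true_and]
    constructor
    · intro h
      by_contra hlt
      exact h (h3 i (le_of_not_gt hlt))
    · intro h hne
      have h0 := (h1 i h).1
      rw [hne] at h0; linarith
  rw [Zu, hfil]
  rcases eq_or_lt_of_le hk with heq | hlt
  · subst heq
    have : (Finset.univ.filter fun i : Fin k => (i : ℕ) < k) = Finset.univ := by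
      apply Finset.filter_true_of_mem; intro i _; exact i.isLt
    rw [this, Finset.card_univ, Fintype.card_fin]
  · have : (Finset.univ.filter fun i : Fin n => (i : ℕ) < k) = Finset.Iio ⟨k, hlt⟩ := by
      ext i
      simp [Finset.mem_Iio, Fin.lt_def]
    rw [this, Fin.card_Iio]

lemma Zu_le {n : ℕ} {T : ℝ} {u : Fin n → ℝ} (h : memU n T u) : Zu u ≤ n := by
  obtain ⟨k, hk, h1, _, h3⟩ := h
  rw [Zu_eq hk h1 h3]; exact hk

lemma memTS_mono {n : ℕ} {T t s : ℝ} {u : Fin n → ℝ} (h : memTS n T t u)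
    (hts : t ≤ s) (hsT : s ≤ T) : memTS n T s u :=
  ⟨h.1, ⟨le_trans h.2.1.1 hts, hsT⟩, fun i => le_trans (h.2.2 i) hts⟩

lemma push_mem {n : ℕ} {T s : ℝ} {u : Fin n → ℝ} (h : memTS n T s u) (hZ : Zu u < n) :
    memTS n T s (push u s) ∧ Zu (push u s) = Zu u + 1 := by
  obtain ⟨⟨k, hk, h1, h2, h3⟩, hs, hus⟩ := h
  have hZk : Zu u = k := Zu_eq hk h1 h3
  have hkn : k < n := hZk ▸ hZ
  have hp : ∀ i : Fin n, push u s i = if (i : ℕ) = k then s else u i := by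
    intro i; rw [push, hZk]
  have h1' : ∀ i : Fin n, (i : ℕ) < k + 1 → push u s i ∈ Set.Icc (0:ℝ) T := by
    intro i hi
    rw [hp i]
    by_cases hik : (i : ℕ) = k
    · rw [if_pos hik]; exact hs
    · rw [if_neg hik]; exact h1 i (by omega)
  have h3' : ∀ i : Fin n, k + 1 ≤ (i : ℕ) → push u s i = -1 := by
    intro i hi
    rw [hp i, if_neg (by omega)]
    exact h3 i (by omega)
  have h2' : ∀ i j : Fin n, (j : ℕ) < k + 1 → i ≤ j → push u s i ≤ push u s j := by
    intro i j hj hij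
    rw [hp i, hp j]
    by_cases hjk : (j : ℕ) = k
    · rw [if_pos hjk]
      by_cases hik : (i : ℕ) = k
      · rw [if_pos hik]
      · rw [if_neg hik]; exact hus i
    · rw [if_neg hjk]
      have hik : (i : ℕ) ≠ k := by
        have := Fin.le_def.1 hij; omega
      rw [if_neg hik]
      exact h2 i j (by omega) hij
  have hk1 : k + 1 ≤ n := by omega
  have hU' : memU n T (push u s) := ⟨k + 1, hk1, h1', h2', h3'⟩
  have hZ' : Zu (push u s) = k + 1 := Zu_eq hk1 h1' h3'
  refine ⟨⟨hU', hs, ?_⟩, by rw [hZ', hZk]⟩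
  intro i
  rw [hp i]
  by_cases hik : (i : ℕ) = k
  · rw [if_pos hik]
  · rw [if_neg hik]; exact hus i

lemma cont_coord {S n : ℕ} {T : ℝ} {D : Model S n} {μ v : ℝ → (Fin n → ℝ) → Fin S → ℝ}
    (hv : SolBackward S n T D μ v) {u : Fin n → ℝ} {t : ℝ} (h : memTS n T t u) (i : Fin S) :
    ContinuousOn (fun s => v s u i) (Set.Icc t T) := by
  have hU := h.1
  have htT : t ≤ T := h.2.1.2
  have hmem : ∀ s ∈ Set.Icc t T, memTS n T s u := fun s hs => memTS_mono h hs.1 hs.2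
  set f := E1rhs D μ v u i with hf
  have hint : ∀ s ∈ Set.Icc t T, IntervalIntegrable f volume s T := fun s hs =>
    ((hv u hU).2 s (hmem s hs) i).1
  have hintT : IntervalIntegrable f volume t T := hint t ⟨le_rfl, htT⟩
  have hcontP : ContinuousOn (fun s => ∫ σ in t..s, f σ) (Set.Icc t T) := by
    have := intervalIntegral.continuousOn_primitive_interval' hintT left_mem_uIcc
    rwa [Set.uIcc_of_le htT] at this
  have heqn : ∀ s ∈ Set.Icc t T, v s u i
      = (D.Psi (Zu u) (μ T u) i + ∫ σ in t..T, f σ) - ∫ σ in t..s, f σ := by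
    intro s hs
    have heq := ((hv u hU).2 s (hmem s hs) i).2
    have hadj : (∫ σ in t..s, f σ) + ∫ σ in s..T, f σ = ∫ σ in t..T, f σ :=
      intervalIntegral.integral_add_adjacent_intervals
        (hintT.mono_set (by
          rw [Set.uIcc_of_le htT, Set.uIcc_of_le hs.1]
          exact Set.Icc_subset_Icc le_rfl hs.2))
        (hint s hs)
    rw [heq]; linarith
  exact (continuousOn_const.sub hcontP).congr heqn

lemma est {S : ℕ} {t T : ℝ} (ht0 : 0 ≤ t) (htT : t ≤ T)
    {w : ℝ → Fin S → ℝ} (hw : ∀ i, ContinuousOn (fun s => w s i) (Set.Icc t T))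
    {f : Fin S → ℝ → ℝ}
    (hint : ∀ i, ∀ s ∈ Set.Icc t T, IntervalIntegrable (f i) volume s T)
    {P c C : ℝ} (hP : 0 ≤ P) (hc : 0 ≤ c) (hC : 0 < C)
    (hterm : ∀ i, |w T i| ≤ P)
    (heq : ∀ i, ∀ s ∈ Set.Icc t T, w s i = w T i + ∫ σ in s..T, f i σ)
    (hfb : ∀ i, ∀ σ ∈ Set.Icc t T, |f i σ| ≤ c + C * ‖w σ‖) :
    ‖w t‖ ≤ (P + c * T) * Real.exp (C * T) := by
  set g : ℝ → ℝ := fun s => ‖w s‖ with hg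
  have hgc : ContinuousOn g (Set.Icc t T) := (continuousOn_pi.mpr hw).norm
  have hg0 : ∀ s ∈ Set.Icc t T, 0 ≤ g s := fun s _ => norm_nonneg _
  have hM : 0 ≤ P + c * T := add_nonneg hP (mul_nonneg hc (le_trans ht0 htT))
  have hineq : ∀ s ∈ Set.Icc t T, g s ≤ (P + c * T) + C * ∫ σ in s..T, g σ := by
    intro s hs
    have hgint : IntervalIntegrable g volume s T := by
      apply ContinuousOn.intervalIntegrable
      rw [Set.uIcc_of_le hs.2]
      exact hgc.mono (Set.Icc_subset_Icc hs.1 le_rfl)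
    have hnonneg : 0 ≤ ∫ σ in s..T, g σ :=
      intervalIntegral.integral_nonneg hs.2 (fun σ _ => norm_nonneg _)
    show ‖w s‖ ≤ _
    apply (pi_norm_le_iff_of_nonneg
      (add_nonneg hM (mul_nonneg hC.le hnonneg))).2
    intro i
    rw [Real.norm_eq_abs]
    have hbint : IntervalIntegrable (fun σ => c + C * g σ) volume s T := by
      apply ContinuousOn.intervalIntegrable
      rw [Set.uIcc_of_le hs.2]
      exact continuousOn_const.add
        (continuousOn_const.mul (hgc.mono (Set.Icc_subset_Icc hs.1 le_rfl)))
    have habs : |∫ σ in s..T, f i σ| ≤ ∫ σ in s..T, |f i σ| :=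
      intervalIntegral.abs_integral_le_integral_abs hs.2
    have hmono : (∫ σ in s..T, |f i σ|) ≤ ∫ σ in s..T, (c + C * g σ) := by
      apply intervalIntegral.integral_mono_on hs.2 (hint i s hs).abs hbint
      intro σ hσ
      exact hfb i σ ⟨le_trans hs.1 hσ.1, hσ.2⟩
    have hsplit : (∫ σ in s..T, (c + C * g σ)) = c * (T - s) + C * ∫ σ in s..T, g σ := by
      rw [intervalIntegral.integral_add intervalIntegrable_const (hgint.const_mul C),
        intervalIntegral.integral_const, intervalIntegral.integral_const_mul, smul_eq_mul,
        mul_comm]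
    have hs0 : 0 ≤ s := le_trans ht0 hs.1
    calc |w s i| = |w T i + ∫ σ in s..T, f i σ| := by rw [← heq i s hs]
      _ ≤ |w T i| + |∫ σ in s..T, f i σ| := abs_add_le _ _
      _ ≤ P + ∫ σ in s..T, |f i σ| := add_le_add (hterm i) habs
      _ ≤ P + (c * (T - s) + C * ∫ σ in s..T, g σ) := by
          rw [← hsplit]; exact add_le_add_right hmono P
      _ ≤ (P + c * T) + C * ∫ σ in s..T, g σ := by nlinarith [mul_nonneg hc hs0]
  have hgron := gronwall_back htT hC hM hgc hg0 hineq t ⟨le_rfl, htT⟩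
  calc ‖w t‖ = g t := rfl
    _ ≤ (P + c * T) * Real.exp (C * (T - t)) := hgron
    _ ≤ (P + c * T) * Real.exp (C * T) := by
        apply mul_le_mul_of_nonneg_left _ hM
        apply Real.exp_le_exp.2
        nlinarith

lemma simplex_norm_le_one {S : ℕ} {m : Fin S → ℝ} (h : m ∈ simplex S) : ‖m‖ ≤ 1 := by
  apply (pi_norm_le_iff_of_nonneg zero_le_one).2
  intro i
  rw [Real.norm_eq_abs, abs_of_nonneg (h.1 i)]
  calc m i ≤ ∑ j, m j := Finset.single_le_sum (fun j _ => h.1 j) (Finset.mem_univ i)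
    _ = 1 := h.2

section ModelSec

variable {S n : ℕ} {T : ℝ} {D : Model S n}
  {Lpsi LQ LPsi Llam Psimax psimax Qmax lammax : ℝ} {Jmax : ℕ}

lemma consts (H : Hyps S n T D Lpsi LQ LPsi Llam Psimax psimax Qmax lammax Jmax) :
    0 ≤ Psimax ∧ 0 ≤ psimax ∧ 0 ≤ Qmax ∧ 0 < lammax := by
  have i0 : Fin S := ⟨0, H.hS⟩
  set u0 : Fin n → ℝ := fun _ => -1 with hu0
  have hU0 : memU n T u0 := ⟨0, Nat.zero_le n,
    fun i hi => absurd hi (Nat.not_lt_zero _),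
    fun i j hj _ => absurd hj (Nat.not_lt_zero _),
    fun i _ => rfl⟩
  have hts : memTS n T 0 u0 := ⟨hU0, ⟨le_rfl, H.hT.le⟩, fun i => by norm_num [hu0]⟩
  have h0T : (0:ℝ) ∈ Set.Icc (0:ℝ) T := ⟨le_rfl, H.hT.le⟩
  refine ⟨le_trans (abs_nonneg _) (H.Psi_bdd 0 (Nat.zero_le n) D.m0 H.hm0 i0),
    le_trans (abs_nonneg _) (H.psi_bdd 0 u0 D.m0 0 hts H.hm0 i0),
    le_trans (Finset.sum_nonneg fun j _ => abs_nonneg _) (H.Q_bdd 0 u0 D.m0 0 hts H.hm0 i0),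
    lt_of_lt_of_le (H.lam_pos 1 le_rfl H.hn 0 h0T D.m0 H.hm0)
      (H.lam_bdd 1 le_rfl H.hn 0 h0T D.m0 H.hm0)⟩

lemma apriori (H : Hyps S n T D Lpsi LQ LPsi Llam Psimax psimax Qmax lammax Jmax)
    {μ v : ℝ → (Fin n → ℝ) → Fin S → ℝ}
    (hμ : MemM S n T Qmax μ) (hv : SolBackward S n T D μ v) :
    ∀ t u, memTS n T t u → ‖v t u‖ ≤ vmaxC n T Psimax psimax Qmax lammax := by
  obtain ⟨hPsimax, hpsimax, hQmax, hlammax⟩ := consts H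
  set A := (Psimax + psimax * T) * Real.exp ((Qmax + lammax) * T) with hA
  set r := Real.exp ((Qmax + lammax) * T) * lammax * T with hr
  have hA0 : 0 ≤ A :=
    mul_nonneg (add_nonneg hPsimax (mul_nonneg hpsimax H.hT.le)) (Real.exp_pos _).le
  have hr0 : 0 ≤ r := mul_nonneg (mul_nonneg (Real.exp_pos _).le hlammax.le) H.hT.le
  set B : ℕ → ℝ := fun m => A * ∑ i ∈ Finset.range (m + 1), r ^ i with hB
  have hB0 : ∀ m, 0 ≤ B m := fun m =>
    mul_nonneg hA0 (Finset.sum_nonneg fun i _ => pow_nonneg hr0 i)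
  have hBmono : ∀ m m' : ℕ, m ≤ m' → B m ≤ B m' := by
    intro m m' hmm
    apply mul_le_mul_of_nonneg_left _ hA0
    apply Finset.sum_le_sum_of_subset_of_nonneg (Finset.range_subset_range.2 (by omega))
    intro i _ _; exact pow_nonneg hr0 i
  have hC : 0 < Qmax + lammax := by linarith
  have key : ∀ Bprev : ℝ, 0 ≤ Bprev → ∀ u t, memTS n T t u →
      (∀ σ ∈ Set.Icc t T, Zu u < n → ‖v σ (push u σ)‖ ≤ Bprev) →
      ‖v t u‖ ≤ (Psimax + (psimax + lammax * Bprev) * T) *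
        Real.exp ((Qmax + lammax) * T) := by
    intro Bprev hBprev u t htu hpush
    have hU := htu.1
    have ht0 : 0 ≤ t := htu.2.1.1
    have htT : t ≤ T := htu.2.1.2
    have hmem : ∀ σ ∈ Set.Icc t T, memTS n T σ u := fun σ hσ => memTS_mono htu hσ.1 hσ.2
    have hZn : Zu u ≤ n := Zu_le hU
    apply est ht0 htT (fun i => cont_coord hv htu i)
      (fun i s hs => ((hv u hU).2 s (hmem s hs) i).1)
      hPsimax (add_nonneg hpsimax (mul_nonneg hlammax.le hBprev)) hC
    · intro i
      rw [(hv u hU).1 i]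
      exact H.Psi_bdd (Zu u) hZn (μ T u) (hμ.1 T u (hmem T ⟨htT, le_rfl⟩)) i
    · intro i s hs
      rw [((hv u hU).2 s (hmem s hs) i).2, (hv u hU).1 i]
    · intro i σ hσ
      have hmσ : memTS n T σ u := hmem σ hσ
      have hsim : μ σ u ∈ simplex S := hμ.1 σ u hmσ
      have hψ : |D.psi σ u (μ σ u) (v σ u) i| ≤ psimax := H.psi_bdd σ u _ _ hmσ hsim i
      have hQv : |∑ j, D.Q σ u (μ σ u) (v σ u) i j * v σ u j| ≤ Qmax * ‖v σ u‖ :=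
        calc |∑ j, D.Q σ u (μ σ u) (v σ u) i j * v σ u j|
            ≤ ∑ j, |D.Q σ u (μ σ u) (v σ u) i j * v σ u j| := Finset.abs_sum_le_sum_abs _ _
          _ ≤ ∑ j, |D.Q σ u (μ σ u) (v σ u) i j| * ‖v σ u‖ := by
              apply Finset.sum_le_sum; intro j _
              rw [abs_mul]
              exact mul_le_mul_of_nonneg_left
                (by rw [← Real.norm_eq_abs]; exact norm_le_pi_norm _ j) (abs_nonneg _)
          _ = (∑ j, |D.Q σ u (μ σ u) (v σ u) i j|) * ‖v σ u‖ := (Finset.sum_mul _ _ _).symm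
          _ ≤ Qmax * ‖v σ u‖ :=
              mul_le_mul_of_nonneg_right (H.Q_bdd σ u _ _ hmσ hsim i) (norm_nonneg _)
      have hlam : |(if Zu u < n then
            D.lam (Zu u + 1) σ (μ σ u) * (v σ (push u σ) (D.J σ i) - v σ u i) else 0)|
          ≤ lammax * (Bprev + ‖v σ u‖) := by
        by_cases hZ : Zu u < n
        · rw [if_pos hZ, abs_mul]
          have hσT : σ ∈ Set.Icc (0:ℝ) T := ⟨le_trans ht0 hσ.1, hσ.2⟩
          have hl0 : 0 < D.lam (Zu u + 1) σ (μ σ u) :=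
            H.lam_pos _ (by omega) (by omega) σ hσT _ hsim
          have hl1 : D.lam (Zu u + 1) σ (μ σ u) ≤ lammax :=
            H.lam_bdd _ (by omega) (by omega) σ hσT _ hsim
          have h2 : |v σ (push u σ) (D.J σ i) - v σ u i| ≤ Bprev + ‖v σ u‖ := by
            apply le_trans (abs_sub _ _)
            apply add_le_add
            · exact le_trans (by rw [← Real.norm_eq_abs]; exact norm_le_pi_norm _ _)
                (hpush σ hσ hZ)
            · rw [← Real.norm_eq_abs]; exact norm_le_pi_norm _ _
          rw [abs_of_pos hl0]
          exact mul_le_mul hl1 h2 (abs_nonneg _) hlammax.le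
        · rw [if_neg hZ]
          simp only [abs_zero]
          exact mul_nonneg hlammax.le (add_nonneg hBprev (norm_nonneg _))
      rw [E1rhs]
      calc |D.psi σ u (μ σ u) (v σ u) i + (∑ j, D.Q σ u (μ σ u) (v σ u) i j * v σ u j) +
            (if Zu u < n then
              D.lam (Zu u + 1) σ (μ σ u) * (v σ (push u σ) (D.J σ i) - v σ u i) else 0)|
          ≤ |D.psi σ u (μ σ u) (v σ u) i + ∑ j, D.Q σ u (μ σ u) (v σ u) i j * v σ u j| +
            |(if Zu u < n then
              D.lam (Zu u + 1) σ (μ σ u) * (v σ (push u σ) (D.J σ i) - v σ u i) else 0)| :=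
            abs_add_le _ _
        _ ≤ |D.psi σ u (μ σ u) (v σ u) i| + |∑ j, D.Q σ u (μ σ u) (v σ u) i j * v σ u j| +
            |(if Zu u < n then
              D.lam (Zu u + 1) σ (μ σ u) * (v σ (push u σ) (D.J σ i) - v σ u i) else 0)| :=
            add_le_add_left (abs_add_le _ _) _
        _ ≤ (psimax + lammax * Bprev) + (Qmax + lammax) * ‖v σ u‖ := by nlinarith
  have claim : ∀ m : ℕ, ∀ u t, memTS n T t u → n - Zu u ≤ m → ‖v t u‖ ≤ B m := by
    intro m
    induction m with
    | zero =>
      intro u t htu hZ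
      have hZn : Zu u = n := by have := Zu_le htu.1; omega
      have h := key 0 le_rfl u t htu (fun σ _ hlt => absurd hlt (by omega))
      have hB00 : B 0 = A := by simp [hB, Finset.sum_range_one]
      refine le_trans h (le_of_eq ?_)
      rw [hB00, hA]; ring
    | succ m ih =>
      intro u t htu hZ
      by_cases hcase : n - Zu u ≤ m
      · exact le_trans (ih u t htu hcase) (hBmono m (m + 1) (Nat.le_succ m))
      · have hZlt : Zu u < n := by omega
        have hpush : ∀ σ ∈ Set.Icc t T, Zu u < n → ‖v σ (push u σ)‖ ≤ B m := by
          intro σ hσ _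
          have hmσ : memTS n T σ u := memTS_mono htu hσ.1 hσ.2
          obtain ⟨hts', hZ'⟩ := push_mem hmσ hZlt
          exact ih (push u σ) σ hts' (by omega)
        refine le_trans (key (B m) (hB0 m) u t htu hpush) (le_of_eq ?_)
        have hgs : ∑ i ∈ Finset.range (m + 2), r ^ i
            = r * ∑ i ∈ Finset.range (m + 1), r ^ i + 1 := geom_sum_succ
        rw [show B (m + 1) = A * (r * ∑ i ∈ Finset.range (m + 1), r ^ i + 1) from by rw [← hgs]]
        simp only [hB, hA, hr]
        ring
  intro t u htu
  have h := claim (n - Zu u) u t htu le_rfl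
  refine le_trans h (le_trans (hBmono _ n (Nat.sub_le n _)) (le_of_eq ?_))
  simp only [hB, hA, hr, vmaxC]

end ModelSec

end MFGShocks
namespace MFGShocks

/-- **Refined backward Lipschitz estimate depending on the number of shocks**
(inside Lemma B.4). If `μ, μ̄ ∈ M` and `v, v̄` are the unique regular solutions of (E1),
(E3) given `μ` and `μ̄` respectively, then for every `(t,u) ∈ TS`,
`‖v(t,u) − v̄(t,u)‖ ≤ (L_Ψ + K₁T) e^{K₂T} (Σ_{i=0}^{n−Z(u)} (e^{K₂T} λmax T)^i)
  sup_{TS} ‖μ − μ̄‖`. -/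
theorem backward_lipschitz_refined (S n : ℕ) (T : ℝ) (D : Model S n)
    (Lpsi LQ LPsi Llam Psimax psimax Qmax lammax : ℝ) (Jmax : ℕ)
    (H : Hyps S n T D Lpsi LQ LPsi Llam Psimax psimax Qmax lammax Jmax)
    (μ μ' : ℝ → (Fin n → ℝ) → Fin S → ℝ)
    (hμ : MemM S n T Qmax μ) (hμ' : MemM S n T Qmax μ')
    (v v' : ℝ → (Fin n → ℝ) → Fin S → ℝ)
    (hvreg : Regular S n T v) (hv : SolBackward S n T D μ v)
    (hv'reg : Regular S n T v') (hv' : SolBackward S n T D μ' v') :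
    ∀ t u, memTS n T t u →
      ‖v t u - v' t u‖ ≤
        (LPsi + K1C n T Lpsi LQ Llam Psimax psimax Qmax lammax * T) *
          Real.exp (K2C n T Lpsi LQ Psimax psimax Qmax lammax * T) *
          (∑ i ∈ Finset.range (n - Zu u + 1),
            (Real.exp (K2C n T Lpsi LQ Psimax psimax Qmax lammax * T) * lammax * T) ^ i) *
          supTS S n T (fun t u => μ t u - μ' t u) := by
  intro t u htu
  obtain ⟨hPsimax, hpsimax, hQmax, hlammax⟩ := consts H
  set vb := vmaxC n T Psimax psimax Qmax lammax with hvb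
  have hvb0 : 0 ≤ vb := by
    rw [hvb, vmaxC]
    apply mul_nonneg
    · exact mul_nonneg (add_nonneg hPsimax (mul_nonneg hpsimax H.hT.le)) (Real.exp_pos _).le
    · exact Finset.sum_nonneg fun i _ => pow_nonneg
        (mul_nonneg (mul_nonneg (Real.exp_pos _).le hlammax.le) H.hT.le) i
  have hbv := apriori H hμ hv
  have hbv' := apriori H hμ' hv'
  set K1 := K1C n T Lpsi LQ Llam Psimax psimax Qmax lammax with hK1
  set K2 := K2C n T Lpsi LQ Psimax psimax Qmax lammax with hK2
  have hK1def : K1 = Lpsi + LQ * vb + 2 * vb * Llam := rfl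
  have hK2def : K2 = Lpsi + vb * LQ + Qmax + lammax := rfl
  have hK10 : 0 ≤ K1 := by
    rw [hK1def]
    nlinarith [H.hLpsi, mul_nonneg H.hLQ.le hvb0, mul_nonneg hvb0 H.hLlam.le]
  have hK2pos : 0 < K2 := by
    rw [hK2def]; nlinarith [H.hLpsi, mul_nonneg hvb0 H.hLQ.le]
  set ε := supTS S n T (fun t u => μ t u - μ' t u) with hε
  have hεb : ∀ s w, memTS n T s w → ‖μ s w - μ' s w‖ ≤ ε := by
    intro s w hsw
    apply le_csSup
    · refine ⟨2, ?_⟩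
      rintro r ⟨s', w', hsw', rfl⟩
      calc ‖μ s' w' - μ' s' w'‖ ≤ ‖μ s' w'‖ + ‖μ' s' w'‖ := norm_sub_le _ _
        _ ≤ 2 := by
            have h1 := simplex_norm_le_one (hμ.1 s' w' hsw')
            have h2 := simplex_norm_le_one (hμ'.1 s' w' hsw')
            linarith
    · exact ⟨s, w, hsw, rfl⟩
  have hε0 : 0 ≤ ε := le_trans (norm_nonneg _) (hεb t u htu)
  set A := (LPsi + K1 * T) * Real.exp (K2 * T) with hA
  set r := Real.exp (K2 * T) * lammax * T with hr
  have hA0 : 0 ≤ A :=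
    mul_nonneg (by nlinarith [H.hLPsi, mul_nonneg hK10 H.hT.le]) (Real.exp_pos _).le
  have hr0 : 0 ≤ r := mul_nonneg (mul_nonneg (Real.exp_pos _).le hlammax.le) H.hT.le
  set Cm : ℕ → ℝ := fun m => A * ∑ i ∈ Finset.range (m + 1), r ^ i with hCm
  have hCm0 : ∀ m, 0 ≤ Cm m := fun m =>
    mul_nonneg hA0 (Finset.sum_nonneg fun i _ => pow_nonneg hr0 i)
  have key : ∀ Cprev : ℝ, 0 ≤ Cprev → ∀ u t, memTS n T t u →
      (∀ σ ∈ Set.Icc t T, Zu u < n → ‖v σ (push u σ) - v' σ (push u σ)‖ ≤ Cprev * ε) →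
      ‖v t u - v' t u‖ ≤
        (LPsi * ε + (K1 * ε + lammax * (Cprev * ε)) * T) * Real.exp (K2 * T) := by
    intro Cprev hCprev u t htu hpush
    have hU := htu.1
    have ht0 : 0 ≤ t := htu.2.1.1
    have htT : t ≤ T := htu.2.1.2
    have hmem : ∀ σ ∈ Set.Icc t T, memTS n T σ u := fun σ hσ => memTS_mono htu hσ.1 hσ.2
    have hZn : Zu u ≤ n := Zu_le hU
    apply est (w := fun s => v s u - v' s u)
      (f := fun i σ => E1rhs D μ v u i σ - E1rhs D μ' v' u i σ) ht0 htT
      (fun i => by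
        simp only [Pi.sub_apply]
        exact (cont_coord hv htu i).sub (cont_coord hv' htu i))
      (fun i s hs => (((hv u hU).2 s (hmem s hs) i).1).sub (((hv' u hU).2 s (hmem s hs) i).1))
      (mul_nonneg H.hLPsi.le hε0)
      (add_nonneg (mul_nonneg hK10 hε0) (mul_nonneg hlammax.le (mul_nonneg hCprev hε0)))
      hK2pos
    · intro i
      have hTm : memTS n T T u := hmem T ⟨htT, le_rfl⟩
      have hsT : μ T u ∈ simplex S := hμ.1 T u hTm
      have hsT' : μ' T u ∈ simplex S := hμ'.1 T u hTm
      simp only [Pi.sub_apply]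
      rw [(hv u hU).1 i, (hv' u hU).1 i, ← Real.norm_eq_abs]
      calc ‖D.Psi (Zu u) (μ T u) i - D.Psi (Zu u) (μ' T u) i‖
          = ‖(D.Psi (Zu u) (μ T u) - D.Psi (Zu u) (μ' T u)) i‖ := by simp [Pi.sub_apply]
        _ ≤ ‖D.Psi (Zu u) (μ T u) - D.Psi (Zu u) (μ' T u)‖ := norm_le_pi_norm _ i
        _ ≤ LPsi * ‖μ T u - μ' T u‖ := H.Psi_lip (Zu u) hZn _ hsT _ hsT'
        _ ≤ LPsi * ε := mul_le_mul_of_nonneg_left (hεb T u hTm) H.hLPsi.le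
    · intro i s hs
      simp only [Pi.sub_apply]
      rw [intervalIntegral.integral_sub (((hv u hU).2 s (hmem s hs) i).1)
          (((hv' u hU).2 s (hmem s hs) i).1),
        ((hv u hU).2 s (hmem s hs) i).2, ((hv' u hU).2 s (hmem s hs) i).2,
        (hv u hU).1 i, (hv' u hU).1 i]
      ring
    · intro i σ hσ
      have hmσ : memTS n T σ u := hmem σ hσ
      have hsim : μ σ u ∈ simplex S := hμ.1 σ u hmσ
      have hsim' : μ' σ u ∈ simplex S := hμ'.1 σ u hmσ
      have hεσ : ‖μ σ u - μ' σ u‖ ≤ ε := hεb σ u hmσ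
      show |E1rhs D μ v u i σ - E1rhs D μ' v' u i σ| ≤
        K1 * ε + lammax * (Cprev * ε) + K2 * ‖v σ u - v' σ u‖
      set g := ‖v σ u - v' σ u‖ with hg
      have hg0 : 0 ≤ g := norm_nonneg _
      set a1 := D.psi σ u (μ σ u) (v σ u) i with ha1
      set b1 := D.psi σ u (μ' σ u) (v' σ u) i with hb1
      set a2 := ∑ j, D.Q σ u (μ σ u) (v σ u) i j * v σ u j with ha2
      set b2 := ∑ j, D.Q σ u (μ' σ u) (v' σ u) i j * v' σ u j with hb2
      set a3 := (if Zu u < n then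
        D.lam (Zu u + 1) σ (μ σ u) * (v σ (push u σ) (D.J σ i) - v σ u i) else 0) with ha3
      set b3 := (if Zu u < n then
        D.lam (Zu u + 1) σ (μ' σ u) * (v' σ (push u σ) (D.J σ i) - v' σ u i) else 0) with hb3
      set s1 := ∑ j, (D.Q σ u (μ σ u) (v σ u) i j - D.Q σ u (μ' σ u) (v' σ u) i j) * v σ u j
        with hs1
      set s2 := ∑ j, D.Q σ u (μ' σ u) (v' σ u) i j * (v σ u j - v' σ u j) with hs2
      have hψ : |a1 - b1| ≤ Lpsi * (ε + g) := by
        refine le_trans (H.psi_lip σ u hmσ _ hsim _ hsim' (v σ u) (v' σ u) i) ?_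
        exact mul_le_mul_of_nonneg_left (add_le_add_left hεσ _) H.hLpsi.le
      have hvd : ∀ j, |v σ u j - v' σ u j| ≤ g := by
        intro j
        have := norm_le_pi_norm (v σ u - v' σ u) j
        simpa [Real.norm_eq_abs] using this
      have hQ1 : |s1| ≤ LQ * (ε + g) * vb := by
        calc |s1| ≤ ∑ j, |(D.Q σ u (μ σ u) (v σ u) i j - D.Q σ u (μ' σ u) (v' σ u) i j)
              * v σ u j| := Finset.abs_sum_le_sum_abs _ _
          _ ≤ ∑ j, |D.Q σ u (μ σ u) (v σ u) i j - D.Q σ u (μ' σ u) (v' σ u) i j| * vb := by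
              apply Finset.sum_le_sum; intro j _
              rw [abs_mul]
              refine mul_le_mul_of_nonneg_left ?_ (abs_nonneg _)
              exact le_trans (by rw [← Real.norm_eq_abs]; exact norm_le_pi_norm _ j)
                (hbv σ u hmσ)
          _ = (∑ j, |D.Q σ u (μ σ u) (v σ u) i j - D.Q σ u (μ' σ u) (v' σ u) i j|) * vb :=
              (Finset.sum_mul _ _ _).symm
          _ ≤ LQ * (‖μ σ u - μ' σ u‖ + ‖v σ u - v' σ u‖) * vb :=
              mul_le_mul_of_nonneg_right
                (H.Q_lip σ u hmσ _ hsim _ hsim' (v σ u) (v' σ u) i) hvb0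
          _ ≤ LQ * (ε + g) * vb := by
              refine mul_le_mul_of_nonneg_right ?_ hvb0
              exact mul_le_mul_of_nonneg_left (add_le_add_left hεσ _) H.hLQ.le
      have hQ2 : |s2| ≤ Qmax * g := by
        calc |s2| ≤ ∑ j, |D.Q σ u (μ' σ u) (v' σ u) i j * (v σ u j - v' σ u j)| :=
              Finset.abs_sum_le_sum_abs _ _
          _ ≤ ∑ j, |D.Q σ u (μ' σ u) (v' σ u) i j| * g := by
              apply Finset.sum_le_sum; intro j _
              rw [abs_mul]
              exact mul_le_mul_of_nonneg_left (hvd j) (abs_nonneg _)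
          _ = (∑ j, |D.Q σ u (μ' σ u) (v' σ u) i j|) * g := (Finset.sum_mul _ _ _).symm
          _ ≤ Qmax * g :=
              mul_le_mul_of_nonneg_right (H.Q_bdd σ u _ _ hmσ hsim' i) hg0
      have hQsplit : a2 - b2 = s1 + s2 := by
        rw [ha2, hb2, hs1, hs2, ← Finset.sum_add_distrib, ← Finset.sum_sub_distrib]
        apply Finset.sum_congr rfl; intros; ring
      have hlamb : |a3 - b3| ≤ Llam * ε * (2 * vb) + lammax * (Cprev * ε + g) := by
        by_cases hZ : Zu u < n
        · rw [ha3, hb3, if_pos hZ, if_pos hZ]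
          obtain ⟨hpm, hZp⟩ := push_mem hmσ hZ
          have hσT : σ ∈ Set.Icc (0:ℝ) T := ⟨le_trans ht0 hσ.1, hσ.2⟩
          have hl1 : D.lam (Zu u + 1) σ (μ' σ u) ≤ lammax :=
            H.lam_bdd _ (by omega) (by omega) σ hσT _ hsim'
          have hl0 : 0 < D.lam (Zu u + 1) σ (μ' σ u) :=
            H.lam_pos _ (by omega) (by omega) σ hσT _ hsim'
          have hll : |D.lam (Zu u + 1) σ (μ σ u) - D.lam (Zu u + 1) σ (μ' σ u)| ≤ Llam * ε :=
            le_trans (H.lam_lip _ (by omega) (by omega) σ hσT _ hsim _ hsim')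
              (mul_le_mul_of_nonneg_left hεσ H.hLlam.le)
          have hX : |v σ (push u σ) (D.J σ i) - v σ u i| ≤ 2 * vb := by
            refine le_trans (abs_sub _ _) ?_
            have b1' : |v σ (push u σ) (D.J σ i)| ≤ vb :=
              le_trans (by rw [← Real.norm_eq_abs]; exact norm_le_pi_norm _ _)
                (hbv σ (push u σ) hpm)
            have b2' : |v σ u i| ≤ vb :=
              le_trans (by rw [← Real.norm_eq_abs]; exact norm_le_pi_norm _ _) (hbv σ u hmσ)
            linarith
          have hXX : |(v σ (push u σ) (D.J σ i) - v σ u i)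
              - (v' σ (push u σ) (D.J σ i) - v' σ u i)| ≤ Cprev * ε + g := by
            have heq2 : (v σ (push u σ) (D.J σ i) - v σ u i)
                - (v' σ (push u σ) (D.J σ i) - v' σ u i)
                = (v σ (push u σ) - v' σ (push u σ)) (D.J σ i) - (v σ u - v' σ u) i := by
              simp only [Pi.sub_apply]; ring
            rw [heq2]
            refine le_trans (abs_sub _ _) (add_le_add ?_ ?_)
            · exact le_trans (by rw [← Real.norm_eq_abs]; exact norm_le_pi_norm _ _)
                (hpush σ hσ hZ)
            · rw [← Real.norm_eq_abs]; exact norm_le_pi_norm _ _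
          have hdec : D.lam (Zu u + 1) σ (μ σ u) * (v σ (push u σ) (D.J σ i) - v σ u i)
              - D.lam (Zu u + 1) σ (μ' σ u) * (v' σ (push u σ) (D.J σ i) - v' σ u i)
              = (D.lam (Zu u + 1) σ (μ σ u) - D.lam (Zu u + 1) σ (μ' σ u))
                  * (v σ (push u σ) (D.J σ i) - v σ u i)
                + D.lam (Zu u + 1) σ (μ' σ u) * ((v σ (push u σ) (D.J σ i) - v σ u i)
                  - (v' σ (push u σ) (D.J σ i) - v' σ u i)) := by ring
          rw [hdec]
          refine le_trans (abs_add_le _ _) (add_le_add ?_ ?_)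
          · rw [abs_mul]
            exact mul_le_mul hll hX (abs_nonneg _) (mul_nonneg H.hLlam.le hε0)
          · rw [abs_mul, abs_of_pos hl0]
            exact mul_le_mul hl1 hXX (abs_nonneg _) hlammax.le
        · rw [ha3, hb3, if_neg hZ, if_neg hZ, sub_zero, abs_zero]
          have h1' : 0 ≤ Llam * ε * (2 * vb) :=
            mul_nonneg (mul_nonneg H.hLlam.le hε0) (by linarith)
          have h2' : 0 ≤ lammax * (Cprev * ε + g) :=
            mul_nonneg hlammax.le (add_nonneg (mul_nonneg hCprev hε0) hg0)
          linarith
      have hEa : E1rhs D μ v u i σ = a1 + a2 + a3 := rfl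
      have hEb : E1rhs D μ' v' u i σ = b1 + b2 + b3 := rfl
      have hXeq : E1rhs D μ v u i σ - E1rhs D μ' v' u i σ
          = (a1 - b1) + (s1 + s2) + (a3 - b3) := by
        rw [hEa, hEb, ← hQsplit]; ring
      rw [hXeq]
      calc |(a1 - b1) + (s1 + s2) + (a3 - b3)|
          ≤ |a1 - b1| + |s1 + s2| + |a3 - b3| :=
            le_trans (abs_add_le _ _) (add_le_add_left (abs_add_le _ _) _)
        _ ≤ |a1 - b1| + (|s1| + |s2|) + |a3 - b3| := by
            have := abs_add_le s1 s2; linarith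
        _ ≤ Lpsi * (ε + g) + (LQ * (ε + g) * vb + Qmax * g)
            + (Llam * ε * (2 * vb) + lammax * (Cprev * ε + g)) := by linarith
        _ = (Lpsi + LQ * vb + 2 * vb * Llam) * ε + lammax * (Cprev * ε)
            + (Lpsi + vb * LQ + Qmax + lammax) * g := by ring
        _ = K1 * ε + lammax * (Cprev * ε) + K2 * g := by rw [hK1def, hK2def]
  have claim : ∀ m : ℕ, ∀ u t, memTS n T t u → n - Zu u ≤ m →
      ‖v t u - v' t u‖ ≤ Cm m * ε := by
    intro m
    induction m with
    | zero =>
      intro u t htu hZ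
      have hZn : Zu u = n := by have := Zu_le htu.1; omega
      have h := key 0 le_rfl u t htu (fun σ _ hlt => absurd hlt (by omega))
      refine le_trans h (le_of_eq ?_)
      have hC00 : Cm 0 = A := by simp [hCm, Finset.sum_range_one]
      rw [hC00, hA]; ring
    | succ m ih =>
      intro u t htu hZ
      by_cases hcase : n - Zu u ≤ m
      · refine le_trans (ih u t htu hcase) (mul_le_mul_of_nonneg_right ?_ hε0)
        apply mul_le_mul_of_nonneg_left _ hA0
        apply Finset.sum_le_sum_of_subset_of_nonneg (Finset.range_subset_range.2 (by omega))
        intro i _ _; exact pow_nonneg hr0 i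
      · have hZlt : Zu u < n := by omega
        have hpush : ∀ σ ∈ Set.Icc t T, Zu u < n →
            ‖v σ (push u σ) - v' σ (push u σ)‖ ≤ Cm m * ε := by
          intro σ hσ _
          have hmσ : memTS n T σ u := memTS_mono htu hσ.1 hσ.2
          obtain ⟨hts', hZ'⟩ := push_mem hmσ hZlt
          exact ih (push u σ) σ hts' (by omega)
        refine le_trans (key (Cm m) (hCm0 m) u t htu hpush) (le_of_eq ?_)
        have hgs : ∑ i ∈ Finset.range (m + 2), r ^ i
            = r * ∑ i ∈ Finset.range (m + 1), r ^ i + 1 := geom_sum_succ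
        rw [show Cm (m + 1) = A * (r * ∑ i ∈ Finset.range (m + 1), r ^ i + 1) from by rw [← hgs]]
        simp only [hCm, hA, hr]
        ring
  exact claim (n - Zu u) u t htu le_rfl

end MFGShocks
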